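/- Let f : (ℝ^d)^H → ℝ be twice differentiable with β-Lipschitz gradient (β-smooth), write H̄ = H − 1, and let f̃(x) = f(x, …, x). Suppose the random tuples X = (x_{t−H̄}, …, x_t) ∈ (ℝ^d)^H and the random vector x_{t+H̄} ∈ ℝ^d satisfy E[‖X − (x_{t+H̄}, …, x_{t+H̄})‖²] ≤ 8·η²·d²H⁴/δ² for some η, δ > 0. Then E[‖Σ_{i=0}^{H̄} ∇_i f(X) − ∇f̃(x_{t+H̄})‖] ≤ 3·β·η·H^{5/2}·d/δ. -/

import Mathlib

open MeasureTheory ProbabilityTheory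

/-- `ℝ^d` with the Euclidean norm. -/
noncomputable abbrev Ed (d : ℕ) : Type := EuclideanSpace ℝ (Fin d)

/-- `(ℝ^d)^H` with the Euclidean norm `‖(v_0, …, v_{H-1})‖² = ∑ i, ‖v_i‖²`. -/
noncomputable abbrev Tup (d H : ℕ) : Type := PiLp 2 (fun _ : Fin H => Ed d)

/-- Package `H` vectors of `ℝ^d` as an element of `(ℝ^d)^H`. -/
def tup {d H : ℕ} (v : Fin H → Ed d) : Tup d H := WithLp.toLp 2 v

noncomputable instance {d H : ℕ} : MeasurableSpace (Tup d H) := borel _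
instance {d H : ℕ} : BorelSpace (Tup d H) := ⟨rfl⟩

/-- The partial gradient `∇_i f (x)` of `f : (ℝ^d)^H → ℝ` with respect to its `i`-th
`ℝ^d`-valued argument, evaluated at `x`. -/
noncomputable def pgrad {d H : ℕ} (f : Tup d H → ℝ) (x : Tup d H) (i : Fin H) : Ed d :=
  gradient (fun z => f (WithLp.toLp 2 (Function.update x i z))) (x i)

open RealInnerProductSpace

lemma inner_gradient {F : Type*} [NormedAddCommGroup F] [InnerProductSpace ℝ F] [CompleteSpace F]
    (f : F → ℝ) (x v : F) : ⟪gradient f x, v⟫ = fderiv ℝ f x v := by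
  rw [← InnerProductSpace.toDual_apply_apply, gradient, LinearIsometryEquiv.apply_symm_apply]

noncomputable def Lsingle (d H : ℕ) (i : Fin H) : Ed d →L[ℝ] Tup d H :=
  (PiLp.continuousLinearEquiv 2 ℝ (fun _ : Fin H => Ed d)).symm.toContinuousLinearMap ∘L
    ContinuousLinearMap.pi (Pi.single i (ContinuousLinearMap.id ℝ (Ed d)))

noncomputable def Ldiag (d H : ℕ) : Ed d →L[ℝ] Tup d H :=
  (PiLp.continuousLinearEquiv 2 ℝ (fun _ : Fin H => Ed d)).symm.toContinuousLinearMap ∘L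
    ContinuousLinearMap.pi (fun _ : Fin H => ContinuousLinearMap.id ℝ (Ed d))

lemma Lsingle_apply {d H : ℕ} (i : Fin H) (w : Ed d) (j : Fin H) :
    (Lsingle d H i w) j = if j = i then w else 0 := by
  simp [Lsingle, Pi.single_apply, apply_ite (fun L : Ed d →L[ℝ] Ed d => L w)]

lemma Ldiag_apply {d H : ℕ} (w : Ed d) (j : Fin H) : (Ldiag d H w) j = w := rfl

section
variable {d H : ℕ} (f : Tup d H → ℝ) (hf : ContDiff ℝ 2 f)

def updTup {d H : ℕ} (x : Tup d H) (i : Fin H) (z : Ed d) : Tup d H := WithLp.toLp 2 (Function.update x i z)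

lemma hasFDeriv_update (x : Tup d H) (i : Fin H) :
    HasFDerivAt (updTup x i) (Lsingle d H i) (x i) := by
  have h : updTup x i = fun z => updTup x i 0 + Lsingle d H i z := by
    funext z
    ext j
    by_cases hj : j = i <;>
      simp [updTup, PiLp.add_apply, Function.update_apply, Lsingle_apply, hj]
  rw [h]
  exact (Lsingle d H i).hasFDerivAt.const_add _

include hf in
lemma inner_pgrad (x : Tup d H) (i : Fin H) (w : Ed d) :
    ⟪pgrad f x i, w⟫ = fderiv ℝ f x (Lsingle d H i w) := by
  have hdf : HasFDerivAt f (fderiv ℝ f x) (WithLp.toLp 2 (Function.update x i (x i))) := by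
    rw [Function.update_eq_self, WithLp.toLp_ofLp]
    exact ((hf.differentiable (by norm_num)) x).hasFDerivAt
  have h2 : HasFDerivAt (fun z : Ed d => f (updTup x i z))
      ((fderiv ℝ f x).comp (Lsingle d H i)) (x i) :=
    hdf.comp (x i) (hasFDeriv_update x i)
  rw [pgrad, inner_gradient,
    show (fun z : Ed d => f (WithLp.toLp 2 (Function.update x i z))) = (fun z => f (updTup x i z)) from rfl,
    h2.fderiv]
  rfl

include hf in
lemma pgrad_eq (x : Tup d H) (i : Fin H) : pgrad f x i = gradient f x i := by
  apply ext_inner_right ℝ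
  intro w
  rw [inner_pgrad f hf x i w, ← inner_gradient f x (Lsingle d H i w), PiLp.inner_apply]
  rw [Finset.sum_eq_single i]
  · rw [Lsingle_apply, if_pos rfl]
  · intro j _ hj
    rw [Lsingle_apply, if_neg hj, inner_zero_right]
  · intro h; exact absurd (Finset.mem_univ i) h

include hf in
lemma grad_tilde (y : Ed d) :
    gradient (fun z : Ed d => f (WithLp.toLp 2 (fun _ => z))) y = ∑ i, pgrad f (tup fun _ => y) i := by
  apply ext_inner_right ℝ
  intro w
  have hdiag : ∀ z : Ed d, (WithLp.toLp 2 (fun _ : Fin H => z) : Tup d H) = Ldiag d H z := fun z => rfl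
  have hdf : HasFDerivAt f (fderiv ℝ f (Ldiag d H y)) (Ldiag d H y) :=
    ((hf.differentiable (by norm_num)) _).hasFDerivAt
  have h2 : HasFDerivAt (fun z : Ed d => f (WithLp.toLp 2 (fun _ => z)))
      ((fderiv ℝ f (Ldiag d H y)).comp (Ldiag d H)) y := by
    have := hdf.comp y (Ldiag d H).hasFDerivAt
    exact this
  rw [inner_gradient, h2.fderiv]
  have hsum : Ldiag d H w = ∑ i : Fin H, Lsingle d H i w := by
    ext j
    have h1 : (∑ i : Fin H, Lsingle d H i w) j = ∑ i : Fin H, (Lsingle d H i w) j :=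
      by rw [WithLp.ofLp_sum, Finset.sum_apply]
    rw [Ldiag_apply, h1, Finset.sum_congr rfl (fun i _ => Lsingle_apply i w j)]
    simp
  have : (tup fun _ : Fin H => y) = Ldiag d H y := rfl
  rw [ContinuousLinearMap.comp_apply, hsum, map_sum, sum_inner]
  refine Finset.sum_congr rfl fun i _ => ?_
  rw [inner_pgrad f hf _ i w, this]

end

/-- Let `f : (ℝ^d)^H → ℝ` be twice differentiable with `β`-Lipschitz
gradient, and `f̃(x) = f(x, …, x)`. If the random tuple `X` and random vector `x'` satisfy
`E[‖X − (x', …, x')‖²] ≤ 8 η² d² H⁴ / δ²`, then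
`E[‖∑ i, ∇_i f (X) − ∇ f̃ (x')‖] ≤ 3 β η H^{5/2} d / δ`. -/
theorem gradient_difference_bound
    (d H : ℕ) (hd : 1 ≤ d) (hH : 1 ≤ H) (β η δ : ℝ) (hβ : 0 ≤ β) (hη : 0 < η) (hδ : 0 < δ)
    (f : Tup d H → ℝ) (hf : ContDiff ℝ 2 f)
    (hsmooth : ∀ a b : Tup d H, ‖gradient f a - gradient f b‖ ≤ β * ‖a - b‖)
    (Ω : Type*) [MeasureSpace Ω] [IsProbabilityMeasure (ℙ : Measure Ω)]
    (X : Ω → Tup d H) (x' : Ω → Ed d)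
    (hXmeas : Measurable X) (hx'meas : Measurable x')
    (hL2 : Integrable (fun ω => ‖X ω - tup (fun _ => x' ω)‖ ^ 2) ℙ)
    (hclose : ∫ ω, ‖X ω - tup (fun _ => x' ω)‖ ^ 2 ∂ℙ ≤ 8 * η ^ 2 * (d : ℝ) ^ 2 * H ^ 4 / δ ^ 2) :
    ∫ ω, ‖(∑ i : Fin H, pgrad f (X ω) i)
        - gradient (fun z : Ed d => f (WithLp.toLp 2 (fun _ => z))) (x' ω)‖ ∂ℙ
      ≤ 3 * β * η * (H : ℝ) ^ ((5 : ℝ) / 2) * d / δ := by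
  classical
  set Y : Ω → Tup d H := fun ω => tup fun _ => x' ω with hY
  have hH0 : (0:ℝ) < H := by exact_mod_cast hH
  have hsH : (0:ℝ) ≤ Real.sqrt H := Real.sqrt_nonneg _
  -- pointwise bound
  have key : ∀ ω, ‖(∑ i : Fin H, pgrad f (X ω) i)
      - gradient (fun z : Ed d => f (WithLp.toLp 2 (fun _ => z))) (x' ω)‖
      ≤ Real.sqrt H * β * ‖X ω - Y ω‖ := by
    intro ω
    rw [grad_tilde f hf]
    set v : Tup d H := gradient f (X ω) - gradient f (Y ω) with hv
    have h1 : (∑ i : Fin H, pgrad f (X ω) i) - ∑ i : Fin H, pgrad f (tup fun _ => x' ω) i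
        = ∑ i : Fin H, v i := by
      rw [← Finset.sum_sub_distrib]
      refine Finset.sum_congr rfl fun i _ => ?_
      rw [pgrad_eq f hf, pgrad_eq f hf, hv, PiLp.sub_apply]
    rw [h1]
    have h2 : ∑ i : Fin H, ‖v i‖ ≤ Real.sqrt H * ‖v‖ := by
      have hc : (∑ i : Fin H, ‖v i‖)^2 ≤ (H : ℝ) * ∑ i : Fin H, ‖v i‖^2 := by
        have := sq_sum_le_card_mul_sum_sq (s := (Finset.univ : Finset (Fin H)))
          (f := fun i => ‖v i‖)
        simpa using this
      have hvn : ∑ i : Fin H, ‖v i‖^2 = ‖v‖^2 := (PiLp.norm_sq_eq_of_L2 _ v).symm ▸ rfl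
      rw [hvn] at hc
      have : ∑ i : Fin H, ‖v i‖ ≤ Real.sqrt ((H:ℝ) * ‖v‖^2) := by
        rw [Real.le_sqrt (Finset.sum_nonneg fun i _ => norm_nonneg _)]
        · exact hc
        · positivity
      calc ∑ i : Fin H, ‖v i‖ ≤ Real.sqrt ((H:ℝ) * ‖v‖^2) := this
        _ = Real.sqrt H * ‖v‖ := by
            rw [Real.sqrt_mul hH0.le, Real.sqrt_sq (norm_nonneg _)]
    calc ‖∑ i : Fin H, v i‖ ≤ ∑ i : Fin H, ‖v i‖ := norm_sum_le _ _
      _ ≤ Real.sqrt H * ‖v‖ := h2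
      _ ≤ Real.sqrt H * (β * ‖X ω - Y ω‖) := by
          exact mul_le_mul_of_nonneg_left (hsmooth _ _) hsH
      _ = Real.sqrt H * β * ‖X ω - Y ω‖ := (mul_assoc _ _ _).symm
  -- integrability
  have hYmeas : Measurable Y := (Ldiag d H).continuous.measurable.comp hx'meas
  have hgmeas : Measurable fun ω => ‖X ω - Y ω‖ := (hXmeas.sub hYmeas).norm
  have hmem : MemLp (fun ω => ‖X ω - Y ω‖) 2 ℙ :=
    (memLp_two_iff_integrable_sq hgmeas.aestronglyMeasurable).2 hL2
  have hint : Integrable (fun ω => ‖X ω - Y ω‖) ℙ := hmem.integrable one_le_two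
  have hsq : (∫ ω, ‖X ω - Y ω‖ ∂ℙ)^2 ≤ ∫ ω, ‖X ω - Y ω‖^2 ∂ℙ := by
    have h := variance_nonneg (fun ω => ‖X ω - Y ω‖) ℙ
    rw [variance_eq_sub hmem] at h
    simp only [Pi.pow_apply] at h
    linarith
  have h0 : 0 ≤ ∫ ω, ‖X ω - Y ω‖ ∂ℙ := integral_nonneg fun ω => norm_nonneg _
  have hIb : ∫ ω, ‖X ω - Y ω‖ ∂ℙ ≤ Real.sqrt (8 * η^2 * (d:ℝ)^2 * (H:ℝ)^4 / δ^2) := by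
    calc ∫ ω, ‖X ω - Y ω‖ ∂ℙ = Real.sqrt ((∫ ω, ‖X ω - Y ω‖ ∂ℙ)^2) := (Real.sqrt_sq h0).symm
      _ ≤ Real.sqrt (∫ ω, ‖X ω - Y ω‖^2 ∂ℙ) := Real.sqrt_le_sqrt hsq
      _ ≤ _ := Real.sqrt_le_sqrt hclose
  have hmain : ∫ ω, ‖(∑ i : Fin H, pgrad f (X ω) i)
        - gradient (fun z : Ed d => f (WithLp.toLp 2 (fun _ => z))) (x' ω)‖ ∂ℙ
      ≤ Real.sqrt H * β * ∫ ω, ‖X ω - Y ω‖ ∂ℙ := by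
    calc _ ≤ ∫ ω, Real.sqrt H * β * ‖X ω - Y ω‖ ∂ℙ :=
          integral_mono_of_nonneg (Filter.Eventually.of_forall fun ω => norm_nonneg _)
            (hint.const_mul _) (Filter.Eventually.of_forall key)
      _ = Real.sqrt H * β * ∫ ω, ‖X ω - Y ω‖ ∂ℙ := integral_const_mul _ _
  -- numeric finish
  have hsqrt8 : Real.sqrt (8 * η^2 * (d:ℝ)^2 * (H:ℝ)^4 / δ^2)
      = Real.sqrt 8 * (η * d * (H:ℝ)^2 / δ) := by
    rw [show 8 * η^2 * (d:ℝ)^2 * (H:ℝ)^4 / δ^2 = (Real.sqrt 8 * (η * d * (H:ℝ)^2 / δ))^2 by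
      rw [mul_pow, Real.sq_sqrt (by norm_num : (0:ℝ) ≤ 8)]
      field_simp]
    exact Real.sqrt_sq (by positivity)
  have hrpow : (H:ℝ) ^ ((5:ℝ)/2) = (H:ℝ)^2 * Real.sqrt H := by
    rw [show (5:ℝ)/2 = (2:ℕ) + (1/2 : ℝ) by norm_num, Real.rpow_add hH0,
      Real.rpow_natCast, ← Real.rpow_natCast (H:ℝ) 2]
    rw [Real.rpow_natCast]
    congr 1
    rw [← Real.sqrt_eq_rpow]
  have h8 : Real.sqrt 8 ≤ 3 := by
    rw [show (3:ℝ) = Real.sqrt 9 by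
      rw [show (9:ℝ) = 3^2 by norm_num, Real.sqrt_sq (by norm_num : (0:ℝ) ≤ 3)]]
    exact Real.sqrt_le_sqrt (by norm_num)
  have hdpos : (0:ℝ) < d := by exact_mod_cast hd
  calc ∫ ω, ‖(∑ i : Fin H, pgrad f (X ω) i)
        - gradient (fun z : Ed d => f (WithLp.toLp 2 (fun _ => z))) (x' ω)‖ ∂ℙ
      ≤ Real.sqrt H * β * ∫ ω, ‖X ω - Y ω‖ ∂ℙ := hmain
    _ ≤ Real.sqrt H * β * (Real.sqrt 8 * (η * d * (H:ℝ)^2 / δ)) := by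
        rw [← hsqrt8]
        exact mul_le_mul_of_nonneg_left hIb (by positivity)
    _ ≤ 3 * β * η * (H : ℝ) ^ ((5 : ℝ) / 2) * d / δ := by
        rw [hrpow]
        have hfac : (0:ℝ) ≤ Real.sqrt H * β * (η * d * (H:ℝ)^2 / δ) := by positivity
        have key2 : Real.sqrt H * β * (Real.sqrt 8 * (η * d * (H:ℝ)^2/δ))
            = Real.sqrt 8 * (Real.sqrt H * β * (η*d*(H:ℝ)^2/δ)) := by ring
        have key3 : 3 * β * η * ((H:ℝ)^2 * Real.sqrt H) * d / δ
            = 3 * (Real.sqrt H * β * (η*d*(H:ℝ)^2/δ)) := by ring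
        rw [key2, key3]
        exact mul_le_mul_of_nonneg_right h8 hfac
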